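/- Let L be a finite-dimensional Leibniz algebra over ℂ and A an automorphism of L. Write A = A₀ + N for the Jordan–Chevalley decomposition of the linear operator A, where A₀ is diagonalizable, N is nilpotent, and A₀N = NA₀. Then A₀ is itself an automorphism of L. -/

import Mathlib

/-- A linear endomorphism is diagonalizable if its eigenspaces span the whole space,
i.e. the space admits a basis of eigenvectors. -/
def IsDiagonalizable {L : Type*} [AddCommGroup L] [Module ℂ L]
    (f : Module.End ℂ L) : Prop :=
  (⨆ μ : ℂ, f.eigenspace μ) = ⊤

/-- Let `L` be a finite-dimensional Leibniz algebra over ℂ and `A` an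
automorphism of `L`. If `A = A₀ + N` is the Jordan–Chevalley decomposition of `A`
(`A₀` diagonalizable, `N` nilpotent, `A₀N = NA₀`), then `A₀` is itself an automorphism. -/
theorem leibniz_jordan_chevalley_diag_part_is_automorphism
    {L : Type*} [AddCommGroup L] [Module ℂ L] [FiniteDimensional ℂ L]
    (b : L →ₗ[ℂ] L →ₗ[ℂ] L)
    (leib : ∀ x y z : L, b (b x y) z = b (b x z) y + b x (b y z))
    (A : Module.End ℂ L)
    (hbij : Function.Bijective A)
    (hA : ∀ x y : L, A (b x y) = b (A x) (A y))
    (A₀ N : Module.End ℂ L)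
    (hdiag : IsDiagonalizable A₀)
    (hnil : IsNilpotent N)
    (hcomm : Commute A₀ N)
    (hsum : A = A₀ + N) :
    Function.Bijective A₀ ∧ ∀ x y : L, A₀ (b x y) = b (A₀ x) (A₀ y) := by
  classical
  have hd : (⨆ μ : ℂ, A₀.eigenspace μ) = ⊤ := hdiag
  -- Step 1: each eigenspace of `A₀` is contained in the corresponding generalized
  -- eigenspace of `A`.
  have hSW : ∀ μ : ℂ, A₀.eigenspace μ ≤ A.maxGenEigenspace μ := by
    intro μ x hx
    obtain ⟨k, hk⟩ := hnil
    rw [Module.End.mem_maxGenEigenspace]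
    refine ⟨k, ?_⟩
    have key : ∀ n : ℕ, ∀ x : L, x ∈ A₀.eigenspace μ →
        ((A - μ • (1 : Module.End ℂ L)) ^ n) x = (N ^ n) x := by
      intro n
      induction n with
      | zero => intro x _; simp
      | succ n ih =>
        intro x hx
        have hx' := Module.End.mem_eigenspace_iff.mp hx
        have h1 : (A - μ • (1 : Module.End ℂ L)) x = N x := by
          simp [hsum, LinearMap.sub_apply, LinearMap.add_apply, hx']
        have hNx : N x ∈ A₀.eigenspace μ := by
          rw [Module.End.mem_eigenspace_iff]
          calc A₀ (N x) = (A₀ * N) x := rfl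
            _ = (N * A₀) x := by rw [hcomm.eq]
            _ = N (A₀ x) := rfl
            _ = μ • N x := by rw [hx', map_smul]
        rw [pow_succ, Module.End.mul_apply, h1, ih (N x) hNx,
          ← Module.End.mul_apply, ← pow_succ]
    rw [key k x hx, hk, LinearMap.zero_apply]
  -- Step 2: each generalized eigenspace of `A` is contained in the corresponding
  -- eigenspace of `A₀`.
  have hWind := Module.End.independent_maxGenEigenspace A
  have hWS : ∀ c : ℂ, A.maxGenEigenspace c ≤ A₀.eigenspace c := by
    intro c w hw
    have hwtop : w ∈ ⨆ μ : ℂ, A₀.eigenspace μ := by rw [hd]; trivial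
    rw [Submodule.mem_iSup_iff_exists_finsupp] at hwtop
    obtain ⟨f, hf, hsumf⟩ := hwtop
    have hrest : w - f c ∈ ⨆ (d : ℂ) (_ : d ≠ c), A.maxGenEigenspace d := by
      have hw' : w - f c = ∑ d ∈ f.support.erase c, f d := by
        rw [← hsumf, Finsupp.sum]
        by_cases hc : c ∈ f.support
        · rw [← Finset.add_sum_erase _ _ hc, add_sub_cancel_left]
        · rw [Finset.erase_eq_of_notMem hc, Finsupp.notMem_support_iff.mp hc, sub_zero]
      rw [hw']
      refine Submodule.sum_mem _ fun d hdmem => ?_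
      exact Submodule.mem_iSup_of_mem d (Submodule.mem_iSup_of_mem
        (Finset.ne_of_mem_erase hdmem) (hSW d (hf d)))
    have hmemc : w - f c ∈ A.maxGenEigenspace c :=
      Submodule.sub_mem _ hw (hSW c (hf c))
    have hz : w - f c = 0 :=
      Submodule.disjoint_def.mp (iSupIndep_def.mp hWind c) _ hmemc hrest
    rw [sub_eq_zero] at hz
    rw [hz]
    exact hf c
  -- Step 3: the bracket of generalized eigenvectors is a generalized eigenvector for
  -- the product of the eigenvalues.
  have hmul : ∀ μ ν : ℂ, ∀ x y : L, x ∈ A.maxGenEigenspace μ → y ∈ A.maxGenEigenspace ν →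
      b x y ∈ A.maxGenEigenspace (μ * ν) := by
    intro μ ν x y hx hy
    rw [Module.End.mem_maxGenEigenspace] at hx hy ⊢
    obtain ⟨k, hk⟩ := hx
    obtain ⟨l, hl⟩ := hy
    refine ⟨k + l, ?_⟩
    have key3 : ∀ n : ℕ, ∀ k l : ℕ, ∀ x y : L, k + l ≤ n →
        ((A - μ • (1 : Module.End ℂ L)) ^ k) x = 0 →
        ((A - ν • (1 : Module.End ℂ L)) ^ l) y = 0 →
        ((A - (μ * ν) • (1 : Module.End ℂ L)) ^ n) (b x y) = 0 := by
      intro n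
      induction n with
      | zero =>
        intro k l x y hkl hx hy
        have hk0 : k = 0 := by omega
        subst hk0
        simp only [pow_zero, Module.End.one_apply] at hx
        simp [hx]
      | succ n ih =>
        intro k l x y hkl hx hy
        match k, l with
        | 0, l =>
          simp only [pow_zero, Module.End.one_apply] at hx
          simp [hx]
        | k, 0 =>
          simp only [pow_zero, Module.End.one_apply] at hy
          simp [hy]
        | k' + 1, l' + 1 =>
          set u : L := (A - μ • (1 : Module.End ℂ L)) x with hu_def
          set v : L := (A - ν • (1 : Module.End ℂ L)) y with hv_def
          have hu : ((A - μ • (1 : Module.End ℂ L)) ^ k') u = 0 := by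
            rw [hu_def, ← Module.End.mul_apply, ← pow_succ]; exact hx
          have hv : ((A - ν • (1 : Module.End ℂ L)) ^ l') v = 0 := by
            rw [hv_def, ← Module.End.mul_apply, ← pow_succ]; exact hy
          have hAx : A x = u + μ • x := by
            rw [hu_def]; simp [LinearMap.sub_apply]
          have hAy : A y = v + ν • y := by
            rw [hv_def]; simp [LinearMap.sub_apply]
          have hexp : (A - (μ * ν) • (1 : Module.End ℂ L)) (b x y) =
              b u v + ν • b u y + μ • b x v := by
            have h1 : b (A x) (A y) =
                b u v + ν • b u y + μ • b x v + (μ * ν) • b x y := by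
              rw [hAx, hAy]
              simp only [map_add, map_smul, LinearMap.add_apply, LinearMap.smul_apply,
                smul_add, smul_smul]
              module
            simp only [LinearMap.sub_apply, LinearMap.smul_apply, Module.End.one_apply,
              hA, h1]
            abel
          rw [pow_succ, Module.End.mul_apply, hexp, map_add, map_add, map_smul, map_smul,
            ih k' l' u v (by omega) hu hv,
            ih k' (l' + 1) u y (by omega) hu hy,
            ih (k' + 1) l' x v (by omega) hx hv]
          simp
    exact key3 (k + l) k l x y le_rfl hk hl
  constructor
  · -- Bijectivity of `A₀`.
    have hinj : Function.Injective A₀ := by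
      rw [injective_iff_map_eq_zero]
      intro v hv
      have hv0 : v ∈ A₀.eigenspace (0 : ℂ) := by
        rw [Module.End.mem_eigenspace_iff, hv, zero_smul]
      have hvW : v ∈ A.maxGenEigenspace (0 : ℂ) := hSW 0 hv0
      rw [Module.End.mem_maxGenEigenspace] at hvW
      obtain ⟨k, hk⟩ := hvW
      have hAk : Function.Injective ⇑(A ^ k) := by
        rw [Module.End.coe_pow]
        exact Function.Injective.iterate hbij.injective k
      have : (A ^ k) v = (A ^ k) 0 := by
        simpa using hk
      exact hAk this
    exact ⟨hinj, (LinearMap.injective_iff_surjective (f := A₀)).mp hinj⟩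
  · -- Multiplicativity of `A₀`.
    intro x y
    have hx : x ∈ ⨆ μ : ℂ, A₀.eigenspace μ := by rw [hd]; trivial
    have hgoal : ∀ x : L, x ∈ (⨆ μ : ℂ, A₀.eigenspace μ) →
        ∀ y : L, A₀ (b x y) = b (A₀ x) (A₀ y) := by
      intro x hx
      induction hx using Submodule.iSup_induction' with
      | mem μ x hxμ =>
        intro y
        have hy : y ∈ ⨆ ν : ℂ, A₀.eigenspace ν := by rw [hd]; trivial
        induction hy using Submodule.iSup_induction' with
        | mem ν y hyν =>
          have hb : b x y ∈ A₀.eigenspace (μ * ν) :=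
            hWS _ (hmul μ ν x y (hSW μ hxμ) (hSW ν hyν))
          rw [Module.End.mem_eigenspace_iff] at hb hxμ hyν
          rw [hb, hxμ, hyν]
          simp [smul_smul, mul_comm]
        | zero => simp
        | add y₁ y₂ _ _ ih₁ ih₂ => simp only [map_add, ih₁, ih₂]
      | zero => intro y; simp
      | add x₁ x₂ _ _ ih₁ ih₂ =>
        intro y
        simp only [map_add, LinearMap.add_apply, ih₁ y, ih₂ y]
    exact hgoal x hx y
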